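/- arXiv:math/0406236 — 7 statements merged into one kernel-verified Lean document; each statement's English description precedes it below -/
import Mathlib

section
/- For every natural number n ≥ 0 and real ε → 0, the limit of (Γ(−n−ε) + Γ(−n+ε))/2 as ε → 0 exists and equals (−1)^n · Γ'(n+1)/Γ(n+1)². -/
open Filter Topology

local notation "γ" => Real.eulerMascheroniConstant

noncomputable def pvQ (n : ℕ) (ε : ℝ) : ℝ := ∏ j ∈ Finset.range n, (ε - (j + 1))

lemma pvQ_hasDerivAt (n : ℕ) :
    HasDerivAt (pvQ n) (-(-1 : ℝ) ^ n * n.factorial * (harmonic n : ℝ)) 0 ∧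
      pvQ n 0 = (-1 : ℝ) ^ n * n.factorial := by
  induction n with
  | zero =>
    constructor
    · have h : pvQ 0 = fun _ : ℝ => (1:ℝ) := by funext ε; simp [pvQ]
      rw [h]
      simpa using hasDerivAt_const (0:ℝ) (1:ℝ)
    · simp [pvQ]
  | succ n ih =>
    obtain ⟨hd, hv⟩ := ih
    have heq : pvQ (n + 1) = fun ε => pvQ n ε * (ε - (n + 1)) := by
      funext ε; simp [pvQ, Finset.prod_range_succ]
    have hlin : HasDerivAt (fun ε : ℝ => ε - ((n : ℝ) + 1)) 1 0 :=
      (hasDerivAt_id 0).sub_const _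
    have hmul := hd.mul hlin
    constructor
    · rw [heq]
      refine HasDerivAt.congr_deriv hmul ?_
      rw [hv, harmonic_succ]
      have h0 : ((n:ℝ) + 1) ≠ 0 := by positivity
      push_cast [Nat.factorial_succ]
      field_simp
      ring
    · rw [heq]
      show pvQ n 0 * (0 - ((n:ℝ) + 1)) = _
      rw [hv]
      push_cast [Nat.factorial_succ]
      ring

lemma pvQ_ne_zero (n : ℕ) {ε : ℝ} (h : |ε| < 1) : pvQ n ε ≠ 0 := by
  have hε : ε < 1 := lt_of_abs_lt h
  refine Finset.prod_ne_zero_iff.mpr fun j _ => ?_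
  have hj : (0 : ℝ) ≤ (j : ℝ) := j.cast_nonneg
  intro hc
  linarith

lemma pvQ_gamma (n : ℕ) {ε : ℝ} (h : |ε| < 1) :
    Real.Gamma ε = Real.Gamma (-(n : ℝ) + ε) * pvQ n ε := by
  have hε : ε < 1 := lt_of_abs_lt h
  induction n with
  | zero => simp [pvQ]
  | succ n ih =>
    have hne : ε - ((n : ℝ) + 1) ≠ 0 := by
      intro hc
      have : (0 : ℝ) ≤ (n : ℝ) := n.cast_nonneg
      linarith
    have hrec : Real.Gamma (-(n : ℝ) + ε) =
        (ε - ((n : ℝ) + 1)) * Real.Gamma (-((n : ℝ) + 1) + ε) := by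
      have := Real.Gamma_add_one hne
      rw [show ε - ((n : ℝ) + 1) + 1 = -(n : ℝ) + ε by ring] at this
      rw [this, show ε - ((n : ℝ) + 1) = -((n : ℝ) + 1) + ε by ring]
    rw [ih, hrec]
    have : pvQ (n + 1) ε = pvQ n ε * (ε - ((n : ℝ) + 1)) := by
      simp [pvQ, Finset.prod_range_succ]
    push_cast [this]
    ring

theorem pv_Gamma_at_neg_nat (n : ℕ) :
    Tendsto (fun ε : ℝ => (Real.Gamma (-(n : ℝ) - ε) + Real.Gamma (-(n : ℝ) + ε)) / 2)
      (𝓝[≠] (0 : ℝ))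
      (𝓝 ((-1) ^ n * (deriv Real.Gamma (n + 1) / (Real.Gamma (n + 1)) ^ 2))) := by
  obtain ⟨hQd, hQv⟩ := pvQ_hasDerivAt n
  set A : ℝ := (-1 : ℝ) ^ n * n.factorial with hA
  set D : ℝ := -(-1 : ℝ) ^ n * n.factorial * (harmonic n : ℝ) with hD
  -- numerator function
  set N : ℝ → ℝ := fun ε => Real.Gamma (1 + ε) * pvQ n (-ε) - Real.Gamma (1 - ε) * pvQ n ε
    with hNdef
  -- derivatives of the pieces at 0
  have h1 : HasDerivAt (fun ε : ℝ => Real.Gamma (1 + ε)) (-γ) 0 := by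
    have hin : HasDerivAt (fun ε : ℝ => 1 + ε) 1 0 := by
      simpa [Pi.add_def] using (hasDerivAt_const (0:ℝ) (1:ℝ)).add (hasDerivAt_id 0)
    have hout : HasDerivAt Real.Gamma (-γ) ((fun ε : ℝ => 1 + ε) 0) := by
      simpa using Real.hasDerivAt_Gamma_one
    simpa [Function.comp_def] using hout.comp 0 hin
  have h2 : HasDerivAt (fun ε : ℝ => Real.Gamma (1 - ε)) γ 0 := by
    have hin : HasDerivAt (fun ε : ℝ => 1 - ε) (-1) 0 := by
      simpa [Pi.sub_def] using (hasDerivAt_const (0:ℝ) (1:ℝ)).sub (hasDerivAt_id 0)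
    have hout : HasDerivAt Real.Gamma (-γ) ((fun ε : ℝ => 1 - ε) 0) := by
      simpa using Real.hasDerivAt_Gamma_one
    simpa [Function.comp_def] using hout.comp 0 hin
  have h4 : HasDerivAt (fun ε : ℝ => pvQ n (-ε)) (-D) 0 := by
    have hin : HasDerivAt (fun ε : ℝ => -ε) (-1) 0 := by
      simpa [Pi.neg_def] using (hasDerivAt_id (0:ℝ)).neg
    have hout : HasDerivAt (pvQ n) D ((fun ε : ℝ => -ε) 0) := by
      simpa using hQd
    simpa [mul_neg_one, Function.comp_def] using hout.comp 0 hin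
  have hN : HasDerivAt N (-γ * A + 1 * -D - (γ * A + 1 * D)) 0 := by
    have := (h1.mul h4).sub (h2.mul hQd)
    simpa [hNdef, Real.Gamma_one, hQv, Pi.mul_def, Pi.sub_def] using this
  have hN0 : N 0 = 0 := by simp [hNdef]
  -- slope limit
  have hslope : Tendsto (fun ε => N ε / ε) (𝓝[≠] (0:ℝ))
      (𝓝 (-γ * A + 1 * -D - (γ * A + 1 * D))) := by
    have := hasDerivAt_iff_tendsto_slope.mp hN
    refine this.congr fun ε => ?_
    simp [slope, hN0, div_eq_inv_mul]
  -- denominator limit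
  have hden : Tendsto (fun ε : ℝ => 2 * (pvQ n ε * pvQ n (-ε))) (𝓝[≠] (0:ℝ))
      (𝓝 (2 * (A * A))) := by
    have hc : ContinuousAt (fun ε : ℝ => 2 * (pvQ n ε * pvQ n (-ε))) 0 := by
      exact (continuousAt_const.mul (hQd.continuousAt.mul h4.continuousAt))
    have h := hc.tendsto
    simp only [neg_zero, hQv] at h
    exact h.mono_left nhdsWithin_le_nhds
  have hfac : (n.factorial : ℝ) ≠ 0 := Nat.cast_ne_zero.mpr n.factorial_ne_zero
  have hAne : A ≠ 0 := by
    simp only [hA]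
    positivity
  have hdenne : 2 * (A * A) ≠ 0 := by positivity
  have hlim := hslope.div hden hdenne
  -- identify the function with ours, eventually
  have hsmall : ∀ᶠ ε : ℝ in 𝓝[≠] (0:ℝ), |ε| < 1 ∧ ε ≠ 0 := by
    filter_upwards [eventually_nhdsWithin_of_eventually_nhds
      (eventually_abs_sub_lt (0:ℝ) one_pos), self_mem_nhdsWithin] with ε h1' h2'
    exact ⟨by simpa using h1', h2'⟩
  have heq : ∀ᶠ ε : ℝ in 𝓝[≠] (0:ℝ),
      N ε / ε / (2 * (pvQ n ε * pvQ n (-ε))) =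
        (Real.Gamma (-(n : ℝ) - ε) + Real.Gamma (-(n : ℝ) + ε)) / 2 := by
    filter_upwards [hsmall] with ε ⟨habs, hne⟩
    have hnegabs : |(-ε)| < 1 := by simpa using habs
    have hg1 : Real.Gamma ε = Real.Gamma (-(n : ℝ) + ε) * pvQ n ε := pvQ_gamma n habs
    have hg2 : Real.Gamma (-ε) = Real.Gamma (-(n : ℝ) + -ε) * pvQ n (-ε) :=
      pvQ_gamma n hnegabs
    rw [show -(n : ℝ) + -ε = -(n : ℝ) - ε by ring] at hg2
    have hga : Real.Gamma (1 + ε) = ε * Real.Gamma ε := by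
      have := Real.Gamma_add_one hne
      rwa [add_comm] at this
    have hgb : Real.Gamma (1 - ε) = (-ε) * Real.Gamma (-ε) := by
      have := Real.Gamma_add_one (neg_ne_zero.mpr hne)
      rwa [show -ε + 1 = 1 - ε by ring] at this
    have hq1 := pvQ_ne_zero n habs
    have hq2 := pvQ_ne_zero n hnegabs
    rw [hNdef]
    simp only
    rw [hga, hgb, hg1, hg2]
    field_simp
    ring
  have hfinal := (hlim.congr' heq)
  -- identify the limit value
  have hval : (-γ * A + 1 * -D - (γ * A + 1 * D)) / (2 * (A * A)) =
      (-1 : ℝ) ^ n * (deriv Real.Gamma (n + 1) / (Real.Gamma (n + 1)) ^ 2) := by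
    rw [Real.deriv_Gamma_nat n, Real.Gamma_nat_eq_factorial, hA, hD]
    have hsq : ((-1 : ℝ) ^ n) * ((-1 : ℝ) ^ n) = 1 := by
      rw [← pow_add, ← two_mul, pow_mul, neg_one_sq, one_pow]
    field_simp
    ring_nf
    have h3 : ((-1 : ℝ)) ^ (n * 3) = (-1 : ℝ) ^ n := by
      rw [pow_mul]
      rw [show (3 : ℕ) = 2 + 1 from rfl, pow_add, pow_one, sq, hsq, one_mul]
    have h2' : ((-1:ℝ))^(n*2) = 1 := by rw [mul_comm, pow_mul, neg_one_sq, one_pow]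
    rw [h2']
    ring
  rwa [hval] at hfinal
end

section
/- If f₁ is holomorphic at a and f₂ is meromorphic with a simple pole at a, then p.v._{z=a}(f₁(z)·f₂(z)) = f₁(a) · p.v._{z=a} f₂(z) + f₁'(a) · res_{z=a} f₂(z). -/
open Filter Topology Complex

/-- The principal value of `f` at `a`:
`p.v._{z=a} f = lim_{ρ→0⁺} (2πi)⁻¹ ∮_{|z-a|=ρ} f z/(z-a) dz`, i.e. the constant
term of the Laurent expansion of `f` at `a` (equivalently `res_{z=a} (f z/(z-a))`). -/
noncomputable def pv (f : ℂ → ℂ) (a : ℂ) : ℂ :=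
  limUnder (𝓝[>] (0 : ℝ))
    (fun ρ : ℝ => (2 * Real.pi * I)⁻¹ * ∮ z in C(a, ρ), f z / (z - a))

/-- The residue of `f` at `a` via the circle integral. -/
noncomputable def res (f : ℂ → ℂ) (a : ℂ) : ℂ :=
  limUnder (𝓝[>] (0 : ℝ)) (fun ρ : ℝ => (2 * Real.pi * I)⁻¹ * ∮ z in C(a, ρ), f z)

private lemma circleIntegral_add {f g : ℂ → ℂ} {c : ℂ} {R : ℝ} (hf : CircleIntegrable f c R)
    (hg : CircleIntegrable g c R) :
    (∮ z in C(c, R), (f z + g z)) = (∮ z in C(c, R), f z) + ∮ z in C(c, R), g z := by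
  simp only [circleIntegral, smul_add, intervalIntegral.integral_add hf.out hg.out]

private lemma limUnder_eq_of_eventually {F : ℝ → ℂ} {v : ℂ}
    (h : ∀ᶠ ρ in 𝓝[>] (0 : ℝ), F ρ = v) : limUnder (𝓝[>] (0 : ℝ)) F = v :=
  Filter.Tendsto.limUnder_eq
    (Filter.Tendsto.congr' (h.mono fun _ hx => hx.symm) tendsto_const_nhds)

theorem pv_mul_simple_pole (f₁ f₂ g : ℂ → ℂ) (a c : ℂ)
    (hf₁ : AnalyticAt ℂ f₁ a) (hg : AnalyticAt ℂ g a)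
    (hf₂ : ∀ z ≠ a, f₂ z = c / (z - a) + g z) :
    pv (fun z => f₁ z * f₂ z) a = f₁ a * pv f₂ a + deriv f₁ a * res f₂ a := by
  obtain ⟨U, hUmem, hU⟩ := (hf₁.eventually_analyticAt.and hg.eventually_analyticAt).exists_mem
  set V : Set ℂ := interior U with hV
  have hVopen : IsOpen V := isOpen_interior
  have haV : a ∈ V := mem_interior_iff_mem_nhds.2 hUmem
  have hAn : ∀ z ∈ V, AnalyticAt ℂ f₁ z ∧ AnalyticAt ℂ g z := fun z hz => hU z (interior_subset hz)
  have hdf₁ : DifferentiableOn ℂ f₁ V := fun z hz => ((hAn z hz).1.differentiableAt).differentiableWithinAt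
  have hdg : DifferentiableOn ℂ g V := fun z hz => ((hAn z hz).2.differentiableAt).differentiableWithinAt
  have hdfg : DifferentiableOn ℂ (fun z => f₁ z * g z) V := hdf₁.mul hdg
  obtain ⟨r, hr0, hrV⟩ := Metric.nhds_basis_closedBall.mem_iff.1 (hVopen.mem_nhds haV)
  have hIoo : Set.Ioo (0 : ℝ) r ∈ 𝓝[>] (0 : ℝ) := Ioo_mem_nhdsGT_of_mem ⟨le_refl _, hr0⟩
  -- facts valid for every ρ ∈ Ioo 0 r
  have key : ∀ ρ ∈ Set.Ioo (0 : ℝ) r,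
      (∮ z in C(a, ρ), f₂ z) = (2 * Real.pi * I) * c ∧
      (∮ z in C(a, ρ), f₂ z / (z - a)) = (2 * Real.pi * I) * g a ∧
      (∮ z in C(a, ρ), f₁ z * f₂ z / (z - a)) =
        (2 * Real.pi * I) * (f₁ a * g a + c * deriv f₁ a) := by
    intro ρ hρ
    have hρ0 : (0 : ℝ) < ρ := hρ.1
    have hsub : Metric.closedBall a ρ ⊆ V :=
      (Metric.closedBall_subset_closedBall hρ.2.le).trans hrV
    have hzne : ∀ z ∈ Metric.sphere a ρ, z ≠ a := by
      intro z hz heq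
      rw [Metric.mem_sphere, heq, dist_self] at hz
      exact hρ0.ne hz
    have hspV : Metric.sphere a ρ ⊆ V := Metric.sphere_subset_closedBall.trans hsub
    have hc₁ : ContinuousOn f₁ (Metric.sphere a ρ) := hdf₁.continuousOn.mono hspV
    have hcg : ContinuousOn g (Metric.sphere a ρ) := hdg.continuousOn.mono hspV
    have hinv : ContinuousOn (fun z : ℂ => (z - a)⁻¹) (Metric.sphere a ρ) :=
      ((continuous_id.sub continuous_const).continuousOn).inv₀
        fun z hz => sub_ne_zero.2 (hzne z hz)
    have hsqinv : ContinuousOn (fun z : ℂ => ((z - a) ^ 2)⁻¹) (Metric.sphere a ρ) :=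
      (((continuous_id.sub continuous_const).pow 2).continuousOn).inv₀
        fun z hz => pow_ne_zero 2 (sub_ne_zero.2 (hzne z hz))
    have hball : a ∈ Metric.ball a ρ := Metric.mem_ball_self hρ0
    -- elementary integrals
    have hI1 : (∮ z in C(a, ρ), (z - a)⁻¹) = 2 * Real.pi * I :=
      circleIntegral.integral_sub_inv_of_mem_ball hball
    have hI2 : (∮ z in C(a, ρ), ((z - a) ^ 2)⁻¹) = 0 := by
      have h := circleIntegral.integral_sub_zpow_of_ne (n := -2) (by decide) a a ρ
      have hfun : ∀ z : ℂ, (z - a) ^ (-2 : ℤ) = ((z - a) ^ 2)⁻¹ := by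
        intro z; rw [zpow_neg]; norm_cast
      simpa only [hfun] using h
    -- Cauchy integral formulas
    have hgball : DiffContOnCl ℂ g (Metric.ball a ρ) :=
      (hdg.mono (Metric.closure_ball_subset_closedBall.trans hsub)).diffContOnCl
    have hfgball : DiffContOnCl ℂ (fun z => f₁ z * g z) (Metric.ball a ρ) :=
      (hdfg.mono (Metric.closure_ball_subset_closedBall.trans hsub)).diffContOnCl
    have hIg : (∮ z in C(a, ρ), (z - a)⁻¹ * g z) = (2 * Real.pi * I) * g a := by
      have := hgball.circleIntegral_sub_inv_smul hball
      simpa only [smul_eq_mul] using this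
    have hIfg : (∮ z in C(a, ρ), (z - a)⁻¹ * (f₁ z * g z)) =
        (2 * Real.pi * I) * (f₁ a * g a) := by
      have := hfgball.circleIntegral_sub_inv_smul hball
      simpa only [smul_eq_mul] using this
    have hIf₁ : (∮ z in C(a, ρ), ((z - a) ^ 2)⁻¹ * f₁ z) =
        (2 * Real.pi * I) * deriv f₁ a := by
      have h := two_pi_I_inv_smul_circleIntegral_sub_sq_inv_smul_of_differentiable
        hVopen hsub hdf₁ hball
      simp only [smul_eq_mul] at h
      rw [← h, ← mul_assoc, mul_inv_cancel₀ two_pi_I_ne_zero, one_mul]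
    have hIg0 : (∮ z in C(a, ρ), g z) = 0 :=
      circleIntegral_eq_zero_of_differentiable_on_off_countable hρ0.le Set.countable_empty
        (hdg.continuousOn.mono hsub)
        (fun z hz => ((hAn z (hsub (Metric.ball_subset_closedBall hz.1))).2).differentiableAt)
    -- integrabilities
    have intInv : CircleIntegrable (fun z : ℂ => c * (z - a)⁻¹) a ρ :=
      (continuousOn_const.mul hinv).circleIntegrable hρ0.le
    have intG : CircleIntegrable g a ρ := hcg.circleIntegrable hρ0.le
    have intSq : CircleIntegrable (fun z : ℂ => c * ((z - a) ^ 2)⁻¹) a ρ :=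
      (continuousOn_const.mul hsqinv).circleIntegrable hρ0.le
    have intInvG : CircleIntegrable (fun z : ℂ => (z - a)⁻¹ * g z) a ρ :=
      (hinv.mul hcg).circleIntegrable hρ0.le
    have intSqF : CircleIntegrable (fun z : ℂ => c * (((z - a) ^ 2)⁻¹ * f₁ z)) a ρ :=
      (continuousOn_const.mul (hsqinv.mul hc₁)).circleIntegrable hρ0.le
    have intInvFG : CircleIntegrable (fun z : ℂ => (z - a)⁻¹ * (f₁ z * g z)) a ρ :=
      (hinv.mul (hc₁.mul hcg)).circleIntegrable hρ0.le
    refine ⟨?_, ?_, ?_⟩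
    · -- residue
      have hcongr : (∮ z in C(a, ρ), f₂ z) = ∮ z in C(a, ρ), (c * (z - a)⁻¹ + g z) := by
        refine circleIntegral.integral_congr hρ0.le fun z hz => ?_
        rw [hf₂ z (hzne z hz), div_eq_mul_inv]
      rw [hcongr, circleIntegral_add intInv intG, hIg0, add_zero]
      have : (∮ z in C(a, ρ), c * (z - a)⁻¹) = c * ∮ z in C(a, ρ), (z - a)⁻¹ := by
        simpa only [smul_eq_mul] using
          circleIntegral.integral_smul c (fun z : ℂ => (z - a)⁻¹) a ρ
      rw [this, hI1]; ring
    · -- pv f₂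
      have hcongr : (∮ z in C(a, ρ), f₂ z / (z - a)) =
          ∮ z in C(a, ρ), (c * ((z - a) ^ 2)⁻¹ + (z - a)⁻¹ * g z) := by
        refine circleIntegral.integral_congr hρ0.le fun z hz => ?_
        have hne : z - a ≠ 0 := sub_ne_zero.2 (hzne z hz)
        rw [hf₂ z (hzne z hz)]
        field_simp
      rw [hcongr, circleIntegral_add intSq intInvG, hIg]
      have : (∮ z in C(a, ρ), c * ((z - a) ^ 2)⁻¹) = c * ∮ z in C(a, ρ), ((z - a) ^ 2)⁻¹ := by
        simpa only [smul_eq_mul] using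
          circleIntegral.integral_smul c (fun z : ℂ => ((z - a) ^ 2)⁻¹) a ρ
      rw [this, hI2]; ring
    · -- pv (f₁ * f₂)
      have hcongr : (∮ z in C(a, ρ), f₁ z * f₂ z / (z - a)) =
          ∮ z in C(a, ρ), (c * (((z - a) ^ 2)⁻¹ * f₁ z) + (z - a)⁻¹ * (f₁ z * g z)) := by
        refine circleIntegral.integral_congr hρ0.le fun z hz => ?_
        have hne : z - a ≠ 0 := sub_ne_zero.2 (hzne z hz)
        rw [hf₂ z (hzne z hz)]
        field_simp
      rw [hcongr, circleIntegral_add intSqF intInvFG, hIfg]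
      have : (∮ z in C(a, ρ), c * (((z - a) ^ 2)⁻¹ * f₁ z)) =
          c * ∮ z in C(a, ρ), ((z - a) ^ 2)⁻¹ * f₁ z := by
        simpa only [smul_eq_mul] using
          circleIntegral.integral_smul c (fun z : ℂ => ((z - a) ^ 2)⁻¹ * f₁ z) a ρ
      rw [this, hIf₁]; ring
  have hres : res f₂ a = c := by
    refine limUnder_eq_of_eventually ?_
    filter_upwards [hIoo] with ρ hρ
    rw [(key ρ hρ).1, ← mul_assoc, inv_mul_cancel₀ two_pi_I_ne_zero, one_mul]
  have hpv₂ : pv f₂ a = g a := by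
    refine limUnder_eq_of_eventually ?_
    filter_upwards [hIoo] with ρ hρ
    rw [(key ρ hρ).2.1, ← mul_assoc, inv_mul_cancel₀ two_pi_I_ne_zero, one_mul]
  have hpvm : pv (fun z => f₁ z * f₂ z) a = f₁ a * g a + c * deriv f₁ a := by
    refine limUnder_eq_of_eventually ?_
    filter_upwards [hIoo] with ρ hρ
    rw [(key ρ hρ).2.2, ← mul_assoc, inv_mul_cancel₀ two_pi_I_ne_zero, one_mul]
  rw [hpvm, hpv₂, hres]; ring
end

section
/- Ramanujan's identity: for every complex (or real) x, Σ_{n=1}^{∞} ((1 + 1/2 + ⋯ + 1/n)/n!) · xⁿ = eˣ · Σ_{n=1}^{∞} ((−1)^{n−1}/(n!·n)) · xⁿ. -/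
open Finset

private lemma aux_alt (n : ℕ) :
    ∑ j ∈ range (n + 1), (-1 : ℂ) ^ j * ((n + 1).choose (j + 1)) = 1 := by
  have h := Int.alternating_sum_range_choose (n := n + 1)
  rw [if_neg (Nat.succ_ne_zero n)] at h
  have h2 : ((∑ i ∈ range (n + 2), (-1 : ℤ) ^ i * ((n+1).choose i) : ℤ) : ℂ) = 0 := by
    rw [h]; norm_num
  push_cast at h2
  rw [Finset.sum_range_succ'] at h2
  simp only [pow_succ, pow_zero, one_mul, Nat.choose_zero_right, Nat.cast_one] at h2
  have h3 : (-1 : ℂ) * ∑ j ∈ range (n + 1), (-1 : ℂ) ^ j * ((n + 1).choose (j + 1)) + 1 = 0 := by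
    rw [Finset.mul_sum]
    rw [← h2]
    congr 1
    refine Finset.sum_congr rfl fun j _ => by ring
  linear_combination -h3

private lemma aux_inv (n : ℕ) :
    ∑ j ∈ range (n + 1), (-1 : ℂ) ^ j * (n.choose j) / (j + 1) = 1 / (n + 1) := by
  have key : ∀ j : ℕ, ((n.choose j : ℂ)) / (j + 1) = ((n+1).choose (j+1) : ℂ) / (n + 1) := by
    intro j
    have h := Nat.add_one_mul_choose_eq n j
    have h' : ((n + 1 : ℕ) * n.choose j : ℂ) = (((n+1).choose (j+1) * (j+1) : ℕ) : ℂ) := by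
      exact_mod_cast congrArg (Nat.cast : ℕ → ℂ) h
    push_cast at h'
    have hj : (j : ℂ) + 1 ≠ 0 := Nat.cast_add_one_ne_zero j
    have hn : (n : ℂ) + 1 ≠ 0 := Nat.cast_add_one_ne_zero n
    field_simp
    linear_combination h'
  calc ∑ j ∈ range (n + 1), (-1 : ℂ) ^ j * (n.choose j) / (j + 1)
      = ∑ j ∈ range (n + 1), (-1 : ℂ) ^ j * ((n+1).choose (j+1)) / (n + 1) := by
        refine Finset.sum_congr rfl fun j _ => ?_
        rw [mul_div_assoc, key j, mul_div_assoc]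
    _ = (∑ j ∈ range (n + 1), (-1 : ℂ) ^ j * ((n+1).choose (j+1))) / (n + 1) := by
        rw [Finset.sum_div]
    _ = 1 / (n + 1) := by rw [aux_alt n]

private lemma central (n : ℕ) :
    ∑ j ∈ range n, (-1 : ℂ) ^ j * (n.choose (j+1)) / (j + 1) = ∑ k ∈ Icc 1 n, (1 : ℂ) / k := by
  induction n with
  | zero => simp
  | succ n ih =>
    have hsplit : ∀ j ∈ range (n + 1),
        (-1 : ℂ) ^ j * ((n+1).choose (j+1)) / (j + 1)
          = (-1 : ℂ) ^ j * (n.choose (j+1)) / (j + 1)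
            + (-1 : ℂ) ^ j * (n.choose j) / (j + 1) := by
      intro j _
      rw [Nat.choose_succ_succ n j]
      push_cast
      ring
    rw [Finset.sum_congr rfl hsplit, Finset.sum_add_distrib, aux_inv n,
      Finset.sum_range_succ, Nat.choose_succ_self]
    rw [Finset.sum_Icc_succ_top (Nat.succ_le_succ (Nat.zero_le n)), ← ih]
    push_cast
    ring

private lemma coeff (n : ℕ) :
    ∑ j ∈ range (n + 1),
        (-1 : ℂ) ^ j / ((n - j).factorial * ((j + 1).factorial * (j + 1)))
      = (∑ k ∈ Icc 1 (n + 1), (1 : ℂ) / k) / ((n + 1).factorial : ℂ) := by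
  rw [← central (n + 1), Finset.sum_div]
  refine Finset.sum_congr rfl fun j hj => ?_
  have hjn : j ≤ n := Nat.lt_succ_iff.mp (Finset.mem_range.mp hj)
  have h := Nat.choose_mul_factorial_mul_factorial (Nat.succ_le_succ hjn)
  rw [Nat.succ_sub_succ] at h
  have h' : (((n+1).choose (j+1) : ℂ)) * (j+1).factorial * (n-j).factorial
      = ((n+1).factorial : ℂ) := by exact_mod_cast congrArg (Nat.cast : ℕ → ℂ) h
  have h1 : ((n - j).factorial : ℂ) ≠ 0 := Nat.cast_ne_zero.mpr (Nat.factorial_ne_zero _)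
  have h2 : (((j + 1).factorial : ℕ) : ℂ) ≠ 0 := Nat.cast_ne_zero.mpr (Nat.factorial_ne_zero _)
  have h3 : (j : ℂ) + 1 ≠ 0 := Nat.cast_add_one_ne_zero j
  have h4 : (((n + 1).factorial : ℕ) : ℂ) ≠ 0 := Nat.cast_ne_zero.mpr (Nat.factorial_ne_zero _)
  field_simp
  linear_combination -h'

private lemma coeff' (n : ℕ) :
    ∑ k ∈ range (n + 1),
        (-1 : ℂ) ^ (n - k) / ((k.factorial : ℂ) * (((n - k + 1).factorial : ℂ) * (((n - k : ℕ) : ℂ) + 1)))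
      = (∑ k ∈ Icc 1 (n + 1), (1 : ℂ) / k) / ((n + 1).factorial : ℂ) := by
  rw [← coeff n,
    ← Finset.sum_range_reflect
      (fun j => (-1 : ℂ) ^ j / ((n - j).factorial * ((j + 1).factorial * (j + 1)))) (n + 1)]
  refine Finset.sum_congr rfl fun k hk => ?_
  have hkn : k ≤ n := Nat.lt_succ_iff.mp (Finset.mem_range.mp hk)
  have h1 : n + 1 - 1 - k = n - k := by omega
  have h2 : n - (n - k) = k := Nat.sub_sub_self hkn
  simp only [h1, h2]

/-- Ramanujan's identity
`∑_{n=1}^∞ (H_n/n!) xⁿ = eˣ ∑_{n=1}^∞ ((-1)^{n-1}/(n!·n)) xⁿ`. -/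
theorem ramanujan_identity (x : ℂ) :
    ∑' n : ℕ, ((∑ k ∈ Finset.Icc 1 (n + 1), (1 : ℂ) / k) / ((n + 1).factorial : ℂ))
        * x ^ (n + 1) =
      Complex.exp x *
        ∑' n : ℕ, ((-1 : ℂ) ^ n / (((n + 1).factorial : ℂ) * (n + 1))) * x ^ (n + 1) := by
  have hexp : Complex.exp x = ∑' n : ℕ, x ^ n / (n.factorial : ℂ) := by
    rw [Complex.exp_eq_exp_ℂ, NormedSpace.exp_eq_tsum_div]
  have hf : Summable fun n : ℕ => ‖x ^ n / (n.factorial : ℂ)‖ := by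
    have : (fun n : ℕ => ‖x ^ n / (n.factorial : ℂ)‖)
        = fun n : ℕ => ‖x‖ ^ n / (n.factorial : ℝ) := by
      funext n
      rw [norm_div, norm_pow, Complex.norm_natCast]
    rw [this]
    exact Real.summable_pow_div_factorial ‖x‖
  have hg : Summable fun n : ℕ =>
      ‖((-1 : ℂ) ^ n / (((n + 1).factorial : ℂ) * (n + 1))) * x ^ (n + 1)‖ := by
    have hs : Summable fun n : ℕ => ‖x‖ ^ (n + 1) / ((n + 1).factorial : ℝ) :=
      (Real.summable_pow_div_factorial ‖x‖).comp_injective Nat.succ_injective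
    refine Summable.of_nonneg_of_le (fun n => norm_nonneg _) (fun n => ?_) hs
    have h1 : ‖((-1 : ℂ) ^ n / (((n + 1).factorial : ℂ) * (n + 1))) * x ^ (n + 1)‖
        = ‖x‖ ^ (n + 1) / (((n + 1).factorial : ℝ) * (n + 1)) := by
      rw [norm_mul, norm_div, norm_pow, norm_neg, norm_one, one_pow, norm_mul,
        Complex.norm_natCast, norm_pow]
      have : ‖(n : ℂ) + 1‖ = (n : ℝ) + 1 := by
        rw [show ((n : ℂ) + 1) = ((n + 1 : ℕ) : ℂ) by push_cast; ring, Complex.norm_natCast]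
        push_cast; ring
      rw [this]; ring
    rw [h1]
    apply div_le_div_of_nonneg_left (pow_nonneg (norm_nonneg x) _)
    · positivity
    · have hfp : (0:ℝ) < ((n+1).factorial : ℝ) := by positivity
      nlinarith [Nat.cast_nonneg (α := ℝ) n]
  rw [hexp, tsum_mul_tsum_eq_tsum_sum_antidiagonal_of_summable_norm hf hg]
  refine tsum_congr fun n => ?_
  rw [Finset.Nat.sum_antidiagonal_eq_sum_range_succ_mk]
  have hterm : ∀ k ∈ range (n + 1),
      x ^ k / ((k.factorial : ℂ))
          * (((-1 : ℂ) ^ (n - k) / ((((n - k) + 1).factorial : ℂ) * (((n - k : ℕ) : ℂ) + 1)))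
            * x ^ ((n - k) + 1))
        = ((-1 : ℂ) ^ (n - k)
            / ((k.factorial : ℂ) * ((((n - k) + 1).factorial : ℂ) * (((n - k : ℕ) : ℂ) + 1))))
          * x ^ (n + 1) := by
    intro k hk
    have hkn : k ≤ n := Nat.lt_succ_iff.mp (Finset.mem_range.mp hk)
    have hx : x ^ k * x ^ ((n - k) + 1) = x ^ (n + 1) := by
      rw [← pow_add]
      congr 1
      omega
    rw [← hx]
    have e1 : ((k.factorial : ℂ)) ≠ 0 := Nat.cast_ne_zero.mpr (Nat.factorial_ne_zero _)
    have e2 : ((((n - k) + 1).factorial : ℕ) : ℂ) ≠ 0 :=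
      Nat.cast_ne_zero.mpr (Nat.factorial_ne_zero _)
    have e3 : (((n - k : ℕ) : ℂ)) + 1 ≠ 0 := Nat.cast_add_one_ne_zero _
    field_simp
  rw [Finset.sum_congr rfl hterm, ← Finset.sum_mul, coeff' n]
end

section
/- Σ_{n=1}^{∞} H_n/n! = e · Σ_{n=1}^{∞} (−1)^{n−1}/(n!·n), where H_n = Σ_{k=1}^{n} 1/k is the n-th harmonic number. -/
open Finset

lemma alt_choose_sum (n : ℕ) :
    ∑ m ∈ Finset.range (n+1), (-1 : ℝ) ^ m * ((n+1).choose (m+1) : ℝ) = 1 := by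
  have h0 : ∑ i ∈ Finset.range (n + 2), (-1 : ℝ) ^ i * ((n+1).choose i : ℝ) = 0 := by
    have := Int.alternating_sum_range_choose (n := n + 1)
    rw [if_neg (Nat.succ_ne_zero n)] at this
    have := congrArg (fun z : ℤ => (z : ℝ)) this
    push_cast at this
    simpa using this
  rw [Finset.sum_range_succ' (fun i => (-1 : ℝ) ^ i * ((n+1).choose i : ℝ)) (n+1)] at h0
  simp only [pow_succ, Nat.choose_zero_right, Nat.cast_one, pow_zero, one_mul] at h0
  have e : ∀ x ∈ Finset.range (n+1), (-1:ℝ)^x * -1 * ((n+1).choose (x+1) : ℝ)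
      = -((-1:ℝ)^x * ((n+1).choose (x+1) : ℝ)) := fun x _ => by ring
  rw [Finset.sum_congr rfl e, Finset.sum_neg_distrib] at h0
  linarith

lemma binom_harmonic (n : ℕ) :
    ∑ m ∈ Finset.range n, (-1 : ℝ) ^ m * ((n.choose (m+1) : ℝ) / (m+1)) =
      ∑ k ∈ Finset.range n, (1 : ℝ) / (k+1) := by
  induction n with
  | zero => simp
  | succ n ih =>
    rw [Finset.sum_range_succ (f := fun k => (1:ℝ)/(k+1)), ← ih]
    have hn1 : ((n:ℝ)+1) ≠ 0 := by positivity
    have split : ∀ m ∈ Finset.range (n+1),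
        (-1:ℝ)^m * (((n+1).choose (m+1) : ℝ) / (m+1)) =
        (-1:ℝ)^m * ((n.choose (m+1) : ℝ) / (m+1)) +
        ((-1:ℝ)^m * ((n+1).choose (m+1) : ℝ)) / ((n:ℝ)+1) := by
      intro m hm
      have pascal : ((n+1).choose (m+1) : ℝ) = n.choose (m+1) + n.choose m := by
        rw [Nat.choose_succ_succ n m]; push_cast; ring
      have key : ((n:ℝ)+1) * (n.choose m : ℝ) = ((n+1).choose (m+1) : ℝ) * ((m:ℝ)+1) := by
        have := Nat.add_one_mul_choose_eq n m
        have := congrArg (fun z : ℕ => (z : ℝ)) this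
        push_cast at this
        linarith
      have hm1 : ((m:ℝ)+1) ≠ 0 := by positivity
      have hdiv : (n.choose m : ℝ)/((m:ℝ)+1) = ((n+1).choose (m+1) : ℝ)/((n:ℝ)+1) := by
        field_simp
        linarith
      conv_lhs => rw [pascal, add_div, mul_add, hdiv]
      ring
    rw [Finset.sum_congr rfl split, Finset.sum_add_distrib, ← Finset.sum_div, alt_choose_sum]
    have hlast : ∑ m ∈ Finset.range (n+1), (-1:ℝ)^m * ((n.choose (m+1) : ℝ) / (m+1))
        = ∑ m ∈ Finset.range n, (-1:ℝ)^m * ((n.choose (m+1) : ℝ) / (m+1)) := by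
      rw [Finset.sum_range_succ]
      simp [Nat.choose_succ_self]
    rw [hlast]

lemma summable_a : Summable (fun n : ℕ => (1 : ℝ) / n.factorial) := by
  simpa using Real.summable_pow_div_factorial 1

lemma summable_b_norm :
    Summable (fun n : ℕ => ‖(-1 : ℝ) ^ n / (((n + 1).factorial : ℝ) * (n + 1))‖) := by
  refine Summable.of_nonneg_of_le (f := fun n : ℕ => (1 : ℝ) / n.factorial)
    (fun n => norm_nonneg _) (fun n => ?_) summable_a
  have h1 : (0:ℝ) < ((n+1).factorial : ℝ) := by positivity
  have h2 : (0:ℝ) < ((n:ℝ)+1) := by positivity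
  rw [norm_div, norm_pow, norm_neg, norm_one, one_pow]
  have : ‖((n + 1).factorial : ℝ) * ((n:ℝ) + 1)‖ = ((n+1).factorial : ℝ) * ((n:ℝ)+1) := by
    rw [Real.norm_eq_abs, abs_of_pos (by positivity)]
  rw [this]
  rw [div_le_div_iff₀ (by positivity) (by positivity)]
  have hle : (n.factorial : ℝ) ≤ ((n+1).factorial : ℝ) := by
    exact_mod_cast Nat.factorial_le (Nat.le_succ n)
  nlinarith [n.factorial_pos, (Nat.cast_pos (α := ℝ)).2 n.factorial_pos]

lemma exp_one_eq : Real.exp 1 = ∑' n : ℕ, (1 : ℝ) / n.factorial := by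
  rw [Real.exp_eq_exp_ℝ, NormedSpace.exp_eq_tsum (𝕂 := ℝ)]
  refine tsum_congr fun n => ?_
  simp [div_eq_inv_mul]

lemma antidiag_sum (n : ℕ) :
    ∑ kl ∈ Finset.HasAntidiagonal.antidiagonal n,
        ((1 : ℝ) / kl.1.factorial) * ((-1 : ℝ) ^ kl.2 / (((kl.2 + 1).factorial : ℝ) * (kl.2 + 1))) =
      (∑ k ∈ Finset.Icc 1 (n + 1), (1 : ℝ) / k) / ((n + 1).factorial : ℝ) := by
  rw [← Finset.Nat.sum_antidiagonal_swap]
  simp only [Prod.fst_swap, Prod.snd_swap]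
  rw [Finset.Nat.sum_antidiagonal_eq_sum_range_succ
    (f := fun k m => ((1 : ℝ) / m.factorial) * ((-1 : ℝ) ^ k / (((k + 1).factorial : ℝ) * (k + 1))))]
  have hIcc : ∑ k ∈ Finset.Icc 1 (n + 1), (1 : ℝ) / k = ∑ i ∈ Finset.range (n+1), (1:ℝ)/(i+1) := by
    rw [← Finset.Ico_add_one_right_eq_Icc, Finset.sum_Ico_eq_sum_range]
    norm_num
    exact Finset.sum_congr rfl fun i _ => by push_cast; rw [add_comm]
  rw [hIcc, ← binom_harmonic (n+1), Finset.sum_div]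
  refine Finset.sum_congr rfl fun k hk => ?_
  have hkn : k ≤ n := Nat.lt_succ_iff.mp (Finset.mem_range.mp hk)
  have hfact : (((n+1).choose (k+1) : ℝ)) * ((k+1).factorial : ℝ) * ((n-k).factorial : ℝ)
      = ((n+1).factorial : ℝ) := by
    have h := Nat.choose_mul_factorial_mul_factorial (Nat.succ_le_succ hkn)
    rw [Nat.succ_sub_succ] at h
    exact_mod_cast h
  have h1 : ((n-k).factorial : ℝ) ≠ 0 := by positivity
  have h2 : (((k+1).factorial : ℝ)) ≠ 0 := by positivity
  have h3 : ((k:ℝ)+1) ≠ 0 := by positivity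
  have h4 : (((n+1).factorial : ℝ)) ≠ 0 := by positivity
  field_simp
  push_cast at hfact ⊢
  linear_combination (-1 : ℝ) * hfact

lemma summable_a_norm : Summable (fun n : ℕ => ‖(1 : ℝ) / n.factorial‖) := by
  refine summable_a.congr fun n => ?_
  rw [Real.norm_eq_abs, abs_of_nonneg (by positivity)]

/-- `∑_{n=1}^∞ H_n/n! = e ∑_{n=1}^∞ (-1)^{n-1}/(n!·n)`. -/
theorem harmonic_factorial_sum :
    ∑' n : ℕ, (∑ k ∈ Finset.Icc 1 (n + 1), (1 : ℝ) / k) / ((n + 1).factorial : ℝ) =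
      Real.exp 1 * ∑' n : ℕ, (-1 : ℝ) ^ n / (((n + 1).factorial : ℝ) * (n + 1)) := by
  rw [exp_one_eq,
    tsum_mul_tsum_eq_tsum_sum_antidiagonal_of_summable_norm summable_a_norm summable_b_norm]
  exact tsum_congr fun n => (antidiag_sum n).symm
end

section
/- The Gompertz-type identity: −e·Ei(−1) = e·( Σ_{n=1}^{∞} (−1)^{n−1}/(n!·n) − γ ), where Ei(−1) = ∫_{−∞}^{−1} eᵗ/t dt and γ is Euler's constant. -/
open MeasureTheory

/-- `Ei(-1) = ∫_{-∞}^{-1} eᵗ/t dt`. -/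
noncomputable def EiNegOne : ℝ := ∫ t in Set.Iio (-1 : ℝ), Real.exp t / t

namespace GompertzAux
open Set Filter


lemma integrableOn_neg_log : IntegrableOn (fun t : ℝ => -Real.log t) (Ioc (0:ℝ) 1) := by
  apply intervalIntegral.integrableOn_deriv_of_nonneg (g := fun t : ℝ => t - t * Real.log t)
  · exact (continuous_id.sub Real.continuous_mul_log).continuousOn
  · intro x hx
    have h1 : HasDerivAt (fun t : ℝ => t * Real.log t) (Real.log x + 1) x := by
      have := (hasDerivAt_id x).mul (Real.hasDerivAt_log (ne_of_gt hx.1))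
      refine this.congr_deriv ?_
      simp only [id_eq, one_mul]
      rw [mul_inv_cancel₀ (ne_of_gt hx.1)]
    have := (hasDerivAt_id x).sub h1
    refine this.congr_deriv ?_; ring
  · intro x hx
    simp [Real.log_nonpos hx.1.le hx.2.le]

lemma I1 : IntegrableOn (fun t : ℝ => Real.log t * Real.exp (-t)) (Ioc (0:ℝ) 1) := by
  refine integrableOn_neg_log.mono'
    ((Real.measurable_log.mul (Real.measurable_exp.comp measurable_neg)).aestronglyMeasurable) ?_
  filter_upwards [ae_restrict_mem measurableSet_Ioc] with t ht
  rw [norm_mul, Real.norm_eq_abs, Real.norm_eq_abs,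
    abs_of_nonpos (Real.log_nonpos ht.1.le ht.2)]
  calc -Real.log t * |Real.exp (-t)| ≤ -Real.log t * 1 := by
        apply mul_le_mul_of_nonneg_left _ (by simp [Real.log_nonpos ht.1.le ht.2])
        rw [abs_of_pos (Real.exp_pos _)]
        exact Real.exp_le_one_iff.mpr (by linarith [ht.1])
    _ = -Real.log t := mul_one _

lemma I2 : IntegrableOn (fun t : ℝ => Real.log t * Real.exp (-t)) (Ioi (1:ℝ)) := by
  have hg : IntegrableOn (fun t : ℝ => Real.exp (-t) * t ^ ((2:ℝ) - 1)) (Ioi (1:ℝ)) :=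
    (Real.GammaIntegral_convergent (by norm_num : (0:ℝ) < 2)).mono_set (Ioi_subset_Ioi zero_le_one)
  refine hg.mono'
    ((Real.measurable_log.mul (Real.measurable_exp.comp measurable_neg)).aestronglyMeasurable) ?_
  filter_upwards [ae_restrict_mem measurableSet_Ioi] with t ht
  have ht1 : (1:ℝ) ≤ t := le_of_lt ht
  have ht0 : (0:ℝ) < t := lt_of_lt_of_le one_pos ht1
  have h2 : ((2:ℝ) - 1) = (1:ℝ) := by norm_num
  rw [norm_mul, Real.norm_eq_abs, Real.norm_eq_abs,
    abs_of_pos (Real.exp_pos _), abs_of_nonneg (Real.log_nonneg ht1), h2, Real.rpow_one]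
  rw [mul_comm (Real.exp (-t)) t]
  exact mul_le_mul_of_nonneg_right
    (le_trans (Real.log_le_sub_one_of_pos ht0) (by linarith)) (Real.exp_pos _).le

lemma I3 : IntegrableOn (fun t : ℝ => Real.exp (-t) / t) (Ioi (1:ℝ)) := by
  refine (exp_neg_integrableOn_Ioi 1 one_pos).mono'
    (((Real.measurable_exp.comp measurable_neg).div measurable_id).aestronglyMeasurable) ?_
  filter_upwards [ae_restrict_mem measurableSet_Ioi] with t ht
  have ht0 : (0:ℝ) < t := lt_of_lt_of_le one_pos ht.le
  rw [Real.norm_eq_abs, abs_of_pos (by positivity), neg_one_mul, div_le_iff₀ ht0]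
  exact le_mul_of_one_le_right (Real.exp_pos _).le ht.le

lemma I4 : IntegrableOn (fun t : ℝ => (1 - Real.exp (-t)) / t) (Ioc (0:ℝ) 1) := by
  refine (integrableOn_const (C := (1:ℝ)) measure_Ioc_lt_top.ne).mono'
    (((measurable_const.sub (Real.measurable_exp.comp measurable_neg)).div
      measurable_id).aestronglyMeasurable) ?_
  filter_upwards [ae_restrict_mem measurableSet_Ioc] with t ht
  have ht0 : (0:ℝ) < t := ht.1
  have h1 : 1 - t ≤ Real.exp (-t) := by linarith [Real.add_one_le_exp (-t)]
  have h2 : Real.exp (-t) ≤ 1 := Real.exp_le_one_iff.mpr (by linarith)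
  rw [Real.norm_eq_abs, abs_of_nonneg (div_nonneg (by linarith) ht0.le), div_le_one ht0]
  linarith







lemma hasDerivAt_exp_neg (x : ℝ) : HasDerivAt (fun t : ℝ => Real.exp (-t)) (-Real.exp (-x)) x := by
  simpa using (hasDerivAt_neg x).exp

lemma L2 : ∫ t in Ioi (1:ℝ), Real.log t * Real.exp (-t) =
    ∫ t in Ioi (1:ℝ), Real.exp (-t) / t := by
  have key : ∫ t in Ioi (1:ℝ), (Real.log t * Real.exp (-t) - Real.exp (-t) / t) = 0 := by
    have h := integral_Ioi_of_hasDerivAt_of_tendsto'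
      (f := fun t : ℝ => -(Real.exp (-t) * Real.log t))
      (f' := fun t : ℝ => Real.log t * Real.exp (-t) - Real.exp (-t) / t) (a := 1) (m := 0)
      ?_ (I2.sub I3) ?_
    · simpa using h
    · intro x hx
      have hx0 : (0:ℝ) < x := lt_of_lt_of_le one_pos hx
      have := ((hasDerivAt_exp_neg x).mul (Real.hasDerivAt_log hx0.ne')).neg
      refine this.congr_deriv ?_
      field_simp
      ring
    · rw [show (0:ℝ) = -0 by norm_num]
      apply Tendsto.neg
      apply squeeze_zero_norm' (a := fun t : ℝ => t ^ 1 * Real.exp (-t))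
      · filter_upwards [eventually_ge_atTop (1:ℝ)] with t ht
        rw [norm_mul, Real.norm_eq_abs, Real.norm_eq_abs, abs_of_pos (Real.exp_pos _),
          abs_of_nonneg (Real.log_nonneg ht), pow_one, mul_comm (Real.exp (-t))]
        exact mul_le_mul_of_nonneg_right
          (le_trans (Real.log_le_sub_one_of_pos (by linarith)) (by linarith)) (Real.exp_pos _).le
      · exact Real.tendsto_pow_mul_exp_neg_atTop_nhds_zero 1
  have := integral_sub I2 I3
  rw [key] at this
  linarith [this]





lemma L1 : ∫ t in Ioc (0:ℝ) 1, Real.log t * Real.exp (-t) =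
    - ∫ t in Ioc (0:ℝ) 1, (1 - Real.exp (-t)) / t := by
  set F : ℝ → ℝ := fun t => (1 - Real.exp (-t)) * Real.log t with hF
  have hcont : ContinuousOn F (Icc 0 1) := by
    intro x hx
    rcases eq_or_lt_of_le hx.1 with h0 | h0
    · -- x = 0
      subst h0
      have hval : F 0 = 0 := by simp [hF]
      rw [ContinuousWithinAt, hval]
      apply squeeze_zero_norm' (a := fun t : ℝ => |t * Real.log t|)
      · filter_upwards [self_mem_nhdsWithin] with t ht
        have ht0 : (0:ℝ) ≤ t := ht.1
        have h1 : 1 - t ≤ Real.exp (-t) := by linarith [Real.add_one_le_exp (-t)]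
        have h2 : Real.exp (-t) ≤ 1 := Real.exp_le_one_iff.mpr (by linarith)
        rw [Real.norm_eq_abs, hF, abs_mul, abs_mul, abs_of_nonneg (by linarith : (0:ℝ) ≤ 1 - Real.exp (-t)), abs_of_nonneg ht0]
        exact mul_le_mul_of_nonneg_right (by linarith) (abs_nonneg _)
      · have : Tendsto (fun t : ℝ => t * Real.log t) (nhdsWithin 0 (Icc 0 1)) (nhds 0) := by
          have h := Real.continuous_mul_log.tendsto 0
          simpa using h.mono_left nhdsWithin_le_nhds
        simpa using this.abs
    · exact ((continuous_const.sub (Real.continuous_exp.comp continuous_neg)).continuousAt.mul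
        (Real.continuousAt_log (ne_of_gt h0))).continuousWithinAt
  have hderiv : ∀ x ∈ Ioo (0:ℝ) 1, HasDerivWithinAt F
      (Real.log x * Real.exp (-x) + (1 - Real.exp (-x)) / x) (Ioi x) x := by
    intro x hx
    have h1 : HasDerivAt (fun t : ℝ => 1 - Real.exp (-t)) (Real.exp (-x)) x := by
      simpa using (hasDerivAt_exp_neg x).const_sub 1
    have := h1.mul (Real.hasDerivAt_log (ne_of_gt hx.1))
    refine (HasDerivAt.hasDerivWithinAt ?_)
    refine this.congr_deriv ?_
    field_simp
  have hint : IntervalIntegrable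
      (fun t : ℝ => Real.log t * Real.exp (-t) + (1 - Real.exp (-t)) / t) volume 0 1 := by
    rw [intervalIntegrable_iff_integrableOn_Ioc_of_le zero_le_one]
    exact I1.add I4
  have key := intervalIntegral.integral_eq_sub_of_hasDeriv_right_of_le zero_le_one hcont hderiv hint
  have hF1 : F 1 = 0 := by simp [hF]
  have hF0 : F 0 = 0 := by simp [hF]
  rw [hF1, hF0, sub_zero, intervalIntegral.integral_of_le zero_le_one,
    integral_add I1 I4] at key
  linarith





lemma total : ∫ t in Ioi (0:ℝ), Real.log t * Real.exp (-t) = -Real.eulerMascheroniConstant := by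
  have h0 := Complex.hasDerivAt_GammaIntegral (s := 1) (by norm_num)
  have hI : (∫ t : ℝ in Ioi 0, (t:ℂ) ^ ((1:ℂ) - 1) * (Real.log t * Real.exp (-t))) =
      ((∫ t in Ioi (0:ℝ), Real.log t * Real.exp (-t) : ℝ) : ℂ) := by
    have hstep : (∫ t : ℝ in Ioi 0, (t:ℂ) ^ ((1:ℂ) - 1) * (Real.log t * Real.exp (-t))) =
        ∫ t : ℝ in Ioi 0, ((Real.log t * Real.exp (-t) : ℝ) : ℂ) := by
      apply setIntegral_congr_fun measurableSet_Ioi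
      intro t _
      push_cast
      rw [sub_self, Complex.cpow_zero, one_mul]
    rw [hstep]; exact integral_ofReal
  rw [hI] at h0
  have hev : Complex.Gamma =ᶠ[nhds (1:ℂ)] Complex.GammaIntegral := by
    have hopen : IsOpen {s : ℂ | 0 < s.re} := isOpen_lt continuous_const Complex.continuous_re
    filter_upwards [hopen.mem_nhds (by norm_num : (0:ℝ) < (1:ℂ).re)] with s hs
    exact Complex.Gamma_eq_integral hs
  have h1 : HasDerivAt Complex.Gamma
      ((∫ t in Ioi (0:ℝ), Real.log t * Real.exp (-t) : ℝ) : ℂ) 1 :=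
    h0.congr_of_eventuallyEq hev
  have h2 : HasDerivAt (fun x : ℝ => (Complex.Gamma (x:ℂ)).re)
      (((∫ t in Ioi (0:ℝ), Real.log t * Real.exp (-t) : ℝ) : ℂ)).re 1 := by
    apply HasDerivAt.real_of_complex
    exact_mod_cast h1
  have h3 : HasDerivAt Real.Gamma
      (∫ t in Ioi (0:ℝ), Real.log t * Real.exp (-t)) 1 := by
    have heq : (fun x : ℝ => (Complex.Gamma (x:ℂ)).re) = Real.Gamma := by
      funext x; rw [Complex.Gamma_ofReal, Complex.ofReal_re]
    rw [heq, Complex.ofReal_re] at h2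
    exact h2
  exact h3.unique Real.hasDerivAt_Gamma_one

lemma split : ∫ t in Ioi (0:ℝ), Real.log t * Real.exp (-t) =
    (∫ t in Ioc (0:ℝ) 1, Real.log t * Real.exp (-t)) +
    ∫ t in Ioi (1:ℝ), Real.log t * Real.exp (-t) := by
  rw [← Ioc_union_Ioi_eq_Ioi zero_le_one,
    setIntegral_union (Ioc_disjoint_Ioi le_rfl) measurableSet_Ioi I1 I2]



lemma pointwise (t : ℝ) (ht : t ≠ 0) :
    (1 - Real.exp (-t)) / t = ∑' n : ℕ, (-1:ℝ) ^ n * t ^ n / ((n+1).factorial : ℝ) := by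
  have hsum : Summable (fun k : ℕ => (-t) ^ k / (k.factorial : ℝ)) :=
    Real.summable_pow_div_factorial (-t)
  have hexp : Real.exp (-t) = ∑' k : ℕ, (-t) ^ k / (k.factorial : ℝ) := by
    rw [Real.exp_eq_exp_ℝ, NormedSpace.exp_eq_tsum_div]
  have h1 : (1 : ℝ) - Real.exp (-t) = ∑' k : ℕ, -((-t) ^ (k+1) / ((k+1).factorial : ℝ)) := by
    have h2 := Summable.tsum_eq_zero_add hsum.neg
    rw [tsum_neg, ← hexp] at h2
    simp only [pow_zero, Nat.factorial_zero, Nat.cast_one] at h2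
    linarith [h2]
  rw [h1, ← tsum_div_const]
  apply tsum_congr
  intro n
  rw [show (-t) ^ (n+1) = (-1:ℝ)^(n+1) * t^(n+1) by rw [neg_pow]]
  field_simp
  ring

lemma series : ∫ t in Ioc (0:ℝ) 1, (1 - Real.exp (-t)) / t =
    ∑' n : ℕ, (-1:ℝ) ^ n / (((n + 1).factorial : ℝ) * (n + 1)) := by
  set f : ℕ → ℝ → ℝ := fun n t => (-1:ℝ) ^ n * t ^ n / ((n+1).factorial : ℝ) with hf
  have hmeas : ∀ n, AEStronglyMeasurable (f n) (volume.restrict (Ioc (0:ℝ) 1)) := fun n =>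
    ((continuous_const.mul (continuous_pow n)).div_const _).aestronglyMeasurable
  have hbound : ∀ n, ∫⁻ t in Ioc (0:ℝ) 1, ‖f n t‖₊ ≤ ENNReal.ofReal (1 / ((n+1).factorial : ℝ)) := by
    intro n
    have : ∀ᵐ t ∂(volume.restrict (Ioc (0:ℝ) 1)),
        (‖f n t‖₊ : ENNReal) ≤ ENNReal.ofReal (1 / ((n+1).factorial : ℝ)) := by
      filter_upwards [ae_restrict_mem measurableSet_Ioc] with t ht
      rw [← enorm_eq_nnnorm, ← ofReal_norm, Real.norm_eq_abs]
      apply ENNReal.ofReal_le_ofReal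
      rw [hf, abs_div, abs_mul, abs_pow, abs_pow, abs_neg, abs_one, one_pow, one_mul,
        Nat.abs_cast]
      apply div_le_div_of_nonneg_right ?_ (by positivity)
      · exact pow_le_one₀ (abs_nonneg t) (by rw [abs_of_pos ht.1]; exact ht.2)
    calc ∫⁻ t in Ioc (0:ℝ) 1, ‖f n t‖₊ ≤ ∫⁻ _ in Ioc (0:ℝ) 1, ENNReal.ofReal (1 / ((n+1).factorial : ℝ)) :=
          lintegral_mono_ae this
      _ = ENNReal.ofReal (1 / ((n+1).factorial : ℝ)) := by
          rw [setLIntegral_const, Real.volume_Ioc]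
          norm_num
  have hsummable : Summable (fun n : ℕ => 1 / (((n+1).factorial : ℝ))) := by
    have := (summable_nat_add_iff 1).mpr (Real.summable_pow_div_factorial 1)
    simpa using this
  have hfin : (∑' n : ℕ, ∫⁻ t in Ioc (0:ℝ) 1, ‖f n t‖₊) ≠ ⊤ := by
    apply ne_top_of_le_ne_top ?_ (ENNReal.tsum_le_tsum hbound)
    rw [← ENNReal.ofReal_tsum_of_nonneg (fun n => by positivity) hsummable]
    exact ENNReal.ofReal_ne_top
  have hswap := integral_tsum hmeas hfin
  have hcongr : ∫ t in Ioc (0:ℝ) 1, (1 - Real.exp (-t)) / t = ∫ t in Ioc (0:ℝ) 1, ∑' n, f n t := by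
    apply setIntegral_congr_fun measurableSet_Ioc
    intro t ht
    exact pointwise t (ne_of_gt ht.1)
  rw [hcongr, hswap]
  apply tsum_congr
  intro n
  have : ∫ t in Ioc (0:ℝ) 1, f n t = ((-1:ℝ)^n / ((n+1).factorial : ℝ)) * ∫ t in (0:ℝ)..1, t ^ n := by
    rw [intervalIntegral.integral_of_le zero_le_one, ← integral_const_mul]
    apply setIntegral_congr_fun measurableSet_Ioc
    intro t _
    rw [hf]; ring
  rw [this, integral_pow]
  field_simp
  simp




lemma Ei_eq : EiNegOne = - ∫ t in Ioi (1:ℝ), Real.exp (-t) / t := by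
  rw [EiNegOne, setIntegral_congr_set Iio_ae_eq_Iic]
  rw [show (-1 : ℝ) = -(1:ℝ) by norm_num, ← integral_comp_neg_Ioi]
  rw [← integral_neg]
  apply setIntegral_congr_fun measurableSet_Ioi
  intro t ht
  have : t ≠ 0 := by intro h; rw [h] at ht; exact absurd ht (by simp)
  field_simp

end GompertzAux

open GompertzAux in
/-- Gompertz-type identity: `-e·Ei(-1) = e·(∑_{n=1}^∞ (-1)^{n-1}/(n!·n) - γ)`. -/
theorem gompertz_identity :
    -(Real.exp 1) * EiNegOne =
      Real.exp 1 *
        ((∑' n : ℕ, (-1 : ℝ) ^ n / (((n + 1).factorial : ℝ) * (n + 1))) -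
          Real.eulerMascheroniConstant) := by
  have h := total
  rw [split] at h
  have hJ : ∫ t in Set.Ioi (1:ℝ), Real.exp (-t) / t =
      (∑' n : ℕ, (-1 : ℝ) ^ n / (((n + 1).factorial : ℝ) * (n + 1))) -
        Real.eulerMascheroniConstant := by
    rw [← series]
    rw [L1, L2] at h
    linarith
  rw [Ei_eq, hJ]
  ring
end

section
/- For every natural n ≥ 1 and every nonzero complex z, Σ_{k=2}^{∞} ((−1)^{k−1}(n+k−1)/(n+k)!) z^k = Σ_{j=0}^{n+1} (−1)^{j+n} ((j−1)/j!) z^{j−n} + (−1)^n e^{−z} (z^{−n+1} + z^{−n}). -/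
set_option maxHeartbeats 1000000

open Finset

lemma fin_id (z : ℂ) (N : ℕ) :
    (∑ j ∈ Finset.range (N + 2), (-1 : ℂ) ^ j * (((j : ℂ) - 1) / (j.factorial : ℂ)) * z ^ j)
      = -z * (∑ m ∈ Finset.range (N + 1), (-z) ^ m / (m.factorial : ℂ))
        - ∑ m ∈ Finset.range (N + 2), (-z) ^ m / (m.factorial : ℂ) := by
  induction N with
  | zero =>
      norm_num [Finset.sum_range_succ, Nat.factorial]
  | succ N ih =>
      rw [show N + 1 + 2 = N + 2 + 1 from rfl]
      rw [Finset.sum_range_succ (f := fun j => (-1 : ℂ) ^ j * (((j : ℂ) - 1) / (j.factorial : ℂ)) * z ^ j)]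
      rw [Finset.sum_range_succ (f := fun m => (-z) ^ m / (m.factorial : ℂ)) (n := N + 2)]
      rw [ih]
      rw [show N + 2 = N + 1 + 1 from rfl]
      rw [Finset.sum_range_succ (f := fun m => (-z) ^ m / (m.factorial : ℂ)) (n := N + 1)]
      have h2 : ((N + 1).factorial : ℂ) ≠ 0 := Nat.cast_ne_zero.2 (Nat.factorial_ne_zero _)
      have h3 : ((N : ℂ) + 1 + 1) ≠ 0 := by
        have := Nat.cast_add_one_ne_zero (R := ℂ) (N + 1)
        push_cast at this ⊢; exact this
      push_cast [Nat.factorial_succ (N + 1)]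
      field_simp
      ring

/-- For `n ≥ 1` and `z ≠ 0`:
`∑_{k=2}^∞ ((-1)^{k-1}(n+k-1)/(n+k)!) z^k
  = ∑_{j=0}^{n+1} (-1)^{j+n}((j-1)/j!) z^{j-n} + (-1)^n e^{-z}(z^{-n+1}+z^{-n})`. -/
theorem f_n_closed_form (n : ℕ) (hn : 1 ≤ n) (z : ℂ) (hz : z ≠ 0) :
    ∑' k : ℕ, ((-1 : ℂ) ^ (k + 1) * ((n : ℂ) + (k : ℂ) + 1) / ((n + k + 2).factorial : ℂ))
        * z ^ (k + 2) =
      (∑ j ∈ Finset.range (n + 2),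
          (-1 : ℂ) ^ (j + n) * (((j : ℂ) - 1) / (j.factorial : ℂ)) * z ^ ((j : ℤ) - (n : ℤ)))
        + (-1 : ℂ) ^ n * Complex.exp (-z) * (z ^ (1 - (n : ℤ)) + z ^ (-(n : ℤ))) := by
  set c1 : ℂ := (-1) ^ n * z ^ (1 - (n : ℤ)) with hc1
  set c2 : ℂ := (-1) ^ n * z ^ (-(n : ℤ)) with hc2
  have hf : Summable (fun m : ℕ => (-z) ^ m / (m.factorial : ℂ)) :=
    NormedSpace.expSeries_div_summable (-z)
  have hexp : Complex.exp (-z) = ∑' m : ℕ, (-z) ^ m / (m.factorial : ℂ) := by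
    rw [Complex.exp_eq_exp_ℂ, NormedSpace.exp_eq_tsum_div]
  have tail : ∀ N : ℕ, (∑' k : ℕ, (-z) ^ (k + N) / ((k + N).factorial : ℂ))
      = Complex.exp (-z) - ∑ m ∈ Finset.range N, (-z) ^ m / (m.factorial : ℂ) := by
    intro N
    rw [hexp]
    exact eq_sub_of_add_eq' (Summable.sum_add_tsum_nat_add N hf)
  have hzp : ∀ (a : ℤ) (b : ℕ), z ^ a * z ^ b = z ^ (a + b) := by
    intro a b
    rw [← zpow_natCast z b, ← zpow_add₀ hz]
  have key : ∀ k : ℕ,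
      ((-1 : ℂ) ^ (k + 1) * ((n : ℂ) + (k : ℂ) + 1) / ((n + k + 2).factorial : ℂ)) * z ^ (k + 2)
        = c1 * ((-z) ^ (k + (n + 1)) / ((k + (n + 1)).factorial : ℂ))
          + c2 * ((-z) ^ (k + (n + 2)) / ((k + (n + 2)).factorial : ℂ)) := by
    intro k
    have hfac : ((n + k + 2).factorial : ℂ) = ((n : ℂ) + k + 2) * ((n + k + 1).factorial : ℂ) := by
      rw [show n + k + 2 = (n + k + 1) + 1 from rfl, Nat.factorial_succ]
      push_cast; ring
    have hfac1 : ((n + k + 1).factorial : ℂ) ≠ 0 := Nat.cast_ne_zero.2 (Nat.factorial_ne_zero _)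
    have hnk2 : ((n : ℂ) + k + 2) ≠ 0 := by
      have h := Nat.cast_add_one_ne_zero (R := ℂ) (n + k + 1)
      intro hc; apply h; push_cast; linear_combination hc
    have s1 : (-1 : ℂ) ^ n * (-1) ^ (k + (n + 1)) = (-1) ^ (k + 1) := by
      rw [← pow_add, show n + (k + (n + 1)) = (k + 1) + 2 * n by ring, pow_add, pow_mul]
      norm_num
    have s2 : (-1 : ℂ) ^ n * (-1) ^ (k + (n + 2)) = (-1) ^ k := by
      rw [← pow_add, show n + (k + (n + 2)) = k + 2 * (n + 1) by ring, pow_add, pow_mul]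
      norm_num
    have p1 : z ^ (1 - (n : ℤ)) * z ^ (k + (n + 1)) = z ^ (k + 2) := by
      rw [hzp, show (1 - (n : ℤ)) + (k + (n + 1) : ℕ) = ((k + 2 : ℕ) : ℤ) by push_cast; ring,
        zpow_natCast]
    have p2 : z ^ (-(n : ℤ)) * z ^ (k + (n + 2)) = z ^ (k + 2) := by
      rw [hzp, show (-(n : ℤ)) + (k + (n + 2) : ℕ) = ((k + 2 : ℕ) : ℤ) by push_cast; ring,
        zpow_natCast]
    have rhs1 : c1 * ((-z) ^ (k + (n + 1)) / ((k + (n + 1)).factorial : ℂ))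
        = (-1) ^ (k + 1) * z ^ (k + 2) / ((n + k + 1).factorial : ℂ) := by
      rw [show k + (n + 1) = n + k + 1 by ring, show (-z) = (-1) * z by ring, mul_pow, hc1]
      calc (-1 : ℂ) ^ n * z ^ (1 - (n : ℤ)) *
            ((-1) ^ (n + k + 1) * z ^ (n + k + 1) / ((n + k + 1).factorial : ℂ))
          = ((-1 : ℂ) ^ n * (-1) ^ (k + (n + 1))) * (z ^ (1 - (n : ℤ)) * z ^ (k + (n + 1)))
              / ((n + k + 1).factorial : ℂ) := by
            rw [show k + (n + 1) = n + k + 1 by ring]; ring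
        _ = (-1) ^ (k + 1) * z ^ (k + 2) / ((n + k + 1).factorial : ℂ) := by rw [s1, p1]
    have rhs2 : c2 * ((-z) ^ (k + (n + 2)) / ((k + (n + 2)).factorial : ℂ))
        = (-1) ^ k * z ^ (k + 2) / ((n + k + 2).factorial : ℂ) := by
      rw [show k + (n + 2) = n + k + 2 by ring, show (-z) = (-1) * z by ring, mul_pow, hc2]
      calc (-1 : ℂ) ^ n * z ^ (-(n : ℤ)) *
            ((-1) ^ (n + k + 2) * z ^ (n + k + 2) / ((n + k + 2).factorial : ℂ))
          = ((-1 : ℂ) ^ n * (-1) ^ (k + (n + 2))) * (z ^ (-(n : ℤ)) * z ^ (k + (n + 2)))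
              / ((n + k + 2).factorial : ℂ) := by
            rw [show k + (n + 2) = n + k + 2 by ring]; ring
        _ = (-1) ^ k * z ^ (k + 2) / ((n + k + 2).factorial : ℂ) := by rw [s2, p2]
    rw [rhs1, rhs2, hfac]
    field_simp
    ring
  rw [tsum_congr key]
  have hs1 : Summable fun k : ℕ => (-z) ^ (k + (n + 1)) / ((k + (n + 1)).factorial : ℂ) :=
    (summable_nat_add_iff (n + 1)).2 hf
  have hs2 : Summable fun k : ℕ => (-z) ^ (k + (n + 2)) / ((k + (n + 2)).factorial : ℂ) :=
    (summable_nat_add_iff (n + 2)).2 hf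
  rw [Summable.tsum_add (hs1.mul_left c1) (hs2.mul_left c2), tsum_mul_left, tsum_mul_left,
    tail (n + 1), tail (n + 2)]
  have hfin : (∑ j ∈ Finset.range (n + 2),
      (-1 : ℂ) ^ (j + n) * (((j : ℂ) - 1) / (j.factorial : ℂ)) * z ^ ((j : ℤ) - (n : ℤ)))
      = -(c1 * (∑ m ∈ Finset.range (n + 1), (-z) ^ m / (m.factorial : ℂ))
          + c2 * (∑ m ∈ Finset.range (n + 2), (-z) ^ m / (m.factorial : ℂ))) := by
    have h := fin_id z n
    have step : (∑ j ∈ Finset.range (n + 2),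
        (-1 : ℂ) ^ (j + n) * (((j : ℂ) - 1) / (j.factorial : ℂ)) * z ^ ((j : ℤ) - (n : ℤ)))
        = (-1 : ℂ) ^ n * z ^ (-(n : ℤ)) *
          ∑ j ∈ Finset.range (n + 2), (-1 : ℂ) ^ j * (((j : ℂ) - 1) / (j.factorial : ℂ)) * z ^ j := by
      rw [Finset.mul_sum]
      refine Finset.sum_congr rfl fun j _ => ?_
      have pz : z ^ ((j : ℤ) - (n : ℤ)) = z ^ (-(n : ℤ)) * z ^ j := by
        rw [hzp, show (-(n : ℤ)) + (j : ℕ) = (j : ℤ) - (n : ℤ) by push_cast; ring]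
      rw [pz, pow_add]
      ring
    rw [step, h, hc1, hc2]
    have hz1 : z ^ ((1 : ℤ) - (n : ℤ)) = z * z ^ (-(n : ℤ)) := by
      rw [sub_eq_add_neg, zpow_add₀ hz, zpow_one]
    rw [hz1]
    ring
  rw [hfin, hc1, hc2]
  have hz1 : z ^ ((1 : ℤ) - (n : ℤ)) = z * z ^ (-(n : ℤ)) := by
    rw [sub_eq_add_neg, zpow_add₀ hz, zpow_one]
  rw [hz1]
  ring
end

section
/- For every complex z, (z+1) · Σ_{n=1}^{∞} Σ_{k=1}^{∞} (−1)^k z^k/(k+n)! = −e^{−z} + (1−e)·z + 1, where the double series converges absolutely. -/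
open Complex

lemma aux_smf : Summable (fun n : ℕ => 1 / ((n.factorial : ℂ))) := by
  simpa using NormedSpace.expSeries_div_summable (1 : ℂ)

lemma aux_smf' (m : ℕ) : Summable (fun n : ℕ => 1 / (((n + m).factorial : ℂ))) :=
  (summable_nat_add_iff m).mpr aux_smf

noncomputable def rho (m : ℕ) : ℂ := ∑' n : ℕ, 1 / ((n + m).factorial : ℂ)

lemma rho_succ (m : ℕ) : rho m = 1 / (m.factorial : ℂ) + rho (m + 1) := by
  have h := Summable.tsum_eq_zero_add (aux_smf' m)
  simpa [rho, add_assoc, add_comm 1 m] using h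

lemma rho_zero : rho 0 = Complex.exp 1 := by
  rw [Complex.exp_eq_exp_ℂ, NormedSpace.exp_eq_tsum_div]
  simp [rho]

lemma rho_two : rho 2 = Complex.exp 1 - 2 := by
  have h0 := rho_zero
  have h1 := rho_succ 0
  have h2 := rho_succ 1
  rw [h1, h2] at h0
  simp [Nat.factorial] at h0 ⊢
  linear_combination h0

set_option maxHeartbeats 1000000 in
/-- `(z+1)·∑_{n=1}^∞ ∑_{k=1}^∞ (-1)^k z^k/(k+n)! = -e^{-z} + (1-e)z + 1`,
with the double series absolutely convergent. -/
theorem double_series_identity (z : ℂ) :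
    Summable (fun p : ℕ × ℕ =>
      ‖(-1 : ℂ) ^ (p.2 + 1) * z ^ (p.2 + 1) / ((p.2 + 1 + (p.1 + 1)).factorial : ℂ)‖) ∧
    (z + 1) *
        ∑' n : ℕ, ∑' k : ℕ,
          (-1 : ℂ) ^ (k + 1) * z ^ (k + 1) / ((k + 1 + (n + 1)).factorial : ℂ) =
      -Complex.exp (-z) + (1 - Real.exp 1) * z + 1 := by
  set w : ℂ := -z with hw
  set f : ℕ × ℕ → ℂ := fun p =>
    (-1 : ℂ) ^ (p.2 + 1) * z ^ (p.2 + 1) / ((p.2 + 1 + (p.1 + 1)).factorial : ℂ) with hf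
  have hmw : ∀ m : ℕ, (-1 : ℂ) ^ m * z ^ m = w ^ m := by
    intro m
    rw [← mul_pow, neg_one_mul, hw]
  have hfw : ∀ p : ℕ × ℕ, f p = w ^ (p.2 + 1) / ((p.2 + 1 + (p.1 + 1)).factorial : ℂ) := by
    intro p
    simp only [hf]
    rw [hmw]
  -- Part 1: summability of norms
  have hA : Summable (fun k : ℕ => ‖z‖ ^ (k + 1) / ((k + 1).factorial : ℝ)) :=
    (summable_nat_add_iff 1).mpr (Real.summable_pow_div_factorial ‖z‖)
  have hB : Summable (fun n : ℕ => 1 / (((n + 1).factorial : ℝ))) := by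
    have := (summable_nat_add_iff 1).mpr
      (by simpa using Real.summable_pow_div_factorial 1)
    simpa using this
  have hnorm : Summable (fun p : ℕ × ℕ => ‖f p‖) := by
    refine Summable.of_nonneg_of_le (fun p => norm_nonneg _) (fun p => ?_)
      (hB.mul_of_nonneg hA (fun n => by positivity) (fun k => by positivity))
    rw [hfw, norm_div, norm_pow, hw, norm_neg, Complex.norm_natCast,
        div_mul_div_comm, one_mul]
    refine div_le_div_of_nonneg_left (by positivity) (by positivity) ?_
    exact_mod_cast Nat.le_of_dvd (Nat.factorial_pos _)
      ((mul_comm ((p.2 + 1).factorial) ((p.1 + 1).factorial)) ▸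
        Nat.factorial_mul_factorial_dvd_factorial_add (p.2 + 1) (p.1 + 1))
  have hsum : Summable f := hnorm.of_norm
  refine ⟨hnorm, ?_⟩
  -- swap order of summation
  have hswap : (∑' n : ℕ, ∑' k : ℕ, f (n, k)) = ∑' k : ℕ, ∑' n : ℕ, f (n, k) :=
    (Summable.tsum_comm (f := fun n k => f (n, k)) hsum).symm
  -- evaluate the inner sum over n
  have hinner : ∀ k : ℕ, (∑' n : ℕ, f (n, k)) = w ^ (k + 1) * rho (k + 2) := by
    intro k
    rw [rho, ← tsum_mul_left]
    refine tsum_congr fun n => ?_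
    have e : n + (k + 2) = k + 1 + (n + 1) := by omega
    rw [hfw, mul_one_div, e]
  set c : ℕ → ℂ := fun k => w ^ (k + 1) * rho (k + 2) with hc
  -- summability of the column sums
  have hcolnorm : Summable (fun k : ℕ => ∑' n : ℕ, ‖f (n, k)‖) :=
    ((summable_prod_of_nonneg (fun p => norm_nonneg _)).mp hnorm.prod_symm).2
  have hcs : Summable c := by
    apply Summable.of_norm_bounded hcolnorm
    intro k
    simp only [hc]
    rw [← hinner k]
    exact norm_tsum_le_tsum_norm (hnorm.prod_symm.prod_factor k)
  have hcs' : Summable (fun k => c (k + 1)) := (summable_nat_add_iff 1).mpr hcs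
  -- the series d
  set d : ℕ → ℂ := fun k => w ^ (k + 2) / ((k + 2).factorial : ℂ) with hd
  have hds : Summable d := (summable_nat_add_iff 2).mpr (NormedSpace.expSeries_div_summable w)
  have hD : ∑' k, d k = Complex.exp w - 1 - w := by
    have h := Summable.sum_add_tsum_nat_add (f := fun n : ℕ => w ^ n / (n.factorial : ℂ)) 2
      (NormedSpace.expSeries_div_summable w)
    have hE : (∑' n : ℕ, w ^ n / (n.factorial : ℂ)) = Complex.exp w := by
      rw [Complex.exp_eq_exp_ℂ, NormedSpace.exp_eq_tsum_div]
    rw [hE] at h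
    rw [Finset.sum_range_succ, Finset.sum_range_one] at h
    simp only [pow_zero, Nat.factorial_zero, Nat.factorial_one, pow_one, Nat.cast_one] at h
    simp only [hd]
    linear_combination h
  -- key telescoping identity
  have key : ∀ k : ℕ, (1 - w) * c k = (c k - c (k + 1)) - d k := by
    intro k
    simp only [hc, hd]
    have h := rho_succ (k + 2)
    have e1 : k + 2 + 1 = k + 3 := by omega
    rw [e1] at h
    have e2 : k + 1 + 1 = k + 2 := by omega
    rw [show k + 1 + 1 + 1 = k + 3 from by omega]
    linear_combination (-(w ^ (k + 2))) * h
  -- compute the sum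
  have hT : (1 - w) * ∑' k, c k = c 0 - (Complex.exp w - 1 - w) := by
    rw [← tsum_mul_left]
    rw [tsum_congr key]
    rw [Summable.tsum_sub (hcs.sub hcs') hds, Summable.tsum_sub hcs hcs']
    have hz := Summable.tsum_eq_zero_add hcs
    rw [hD]
    linear_combination hz
  have hcol : (∑' n : ℕ, ∑' k : ℕ, f (n, k)) = ∑' k, c k := by
    rw [hswap]; exact tsum_congr hinner
  show (z + 1) * (∑' n : ℕ, ∑' k : ℕ, f (n, k)) = _
  rw [hcol]
  have hz1 : (z + 1 : ℂ) = 1 - w := by rw [hw]; ring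
  rw [hz1, hT]
  have hc0 : c 0 = w * (Complex.exp 1 - 2) := by
    simp only [hc]
    norm_num [rho_two]
  rw [hc0, hw]
  rw [show ((Real.exp 1 : ℝ) : ℂ) = Complex.exp 1 from by
    rw [Complex.ofReal_exp, Complex.ofReal_one]]
  ring
end
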